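/- Let b,ℓ ≥ 1 be integers, let x, z ∈ {0,…,s−1}^ℓ be such that z_k − x_k is even for every coordinate k, and let W be a subset of the middle layer {v_{ℓ,y} : y ∈ {0,…,s−1}^ℓ} of H_{b,ℓ}. Let H' be the weighted graph obtained from H_{b,ℓ} by deleting all vertices of W (and their incident edges). If v_{ℓ,(x+z)/2} ∉ W, then the weighted distance from v_{0,x} to v_{2ℓ,z} in H' equals the weighted distance in H_{b,ℓ}. If v_{ℓ,(x+z)/2} ∈ W, then either no walk from v_{0,x} to v_{2ℓ,z} exists in H', or the weighted distance in H' is strictly greater than in H_{b,ℓ}. In particular, membership of v_{ℓ,(x+z)/2} in W is determined by x, z and the weighted distance from v_{0,x} to v_{2ℓ,z} in H'. -/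

import Mathlib

/-- The vertex set of the graph `H_{b,ℓ}`: levels `0,…,2ℓ`, each a copy of `{0,…,2^b-1}^ℓ`. -/
abbrev HVert (b ℓ : ℕ) := Fin (2 * ℓ + 1) × (Fin ℓ → Fin (2 ^ b))

/-- The (0-indexed) coordinate `c(i)` that may change on a step from level `i` to `i+1`. -/
def cidx (ℓ i : ℕ) : ℕ := if i < ℓ then i else 2 * ℓ - 1 - i

/-- `u` is one level below `v` and their coordinate vectors agree outside coordinate
`c(level of u)`. -/
def HStep {b ℓ : ℕ} (u v : HVert b ℓ) : Prop :=
  (u.1 : ℕ) + 1 = (v.1 : ℕ) ∧ ∀ k : Fin ℓ, (k : ℕ) ≠ cidx ℓ (u.1 : ℕ) → u.2 k = v.2 k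

/-- The graph `H_{b,ℓ}`. -/
def HGraph (b ℓ : ℕ) : SimpleGraph (HVert b ℓ) where
  Adj u v := HStep u v ∨ HStep v u
  symm := ⟨fun _ _ h => Or.symm h⟩
  loopless := ⟨by
    intro u h
    rcases h with h | h <;> exact absurd h.1 (by omega)⟩

/-- The weight of an edge of `H_{b,ℓ}`: `A + (difference at the changing coordinate)²`,
where `A = 3ℓs²`, `s = 2^b`.  (For adjacent vertices all other coordinates agree, so the
sum below has a single nonzero term.) -/
def HWeight {b ℓ : ℕ} (u v : HVert b ℓ) : ℕ :=
  3 * ℓ * (2 ^ b) ^ 2 + ∑ k : Fin ℓ, (((u.2 k : ℤ) - ((v.2 k : ℕ) : ℤ)).natAbs) ^ 2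

/-- The weighted length of a walk in `H_{b,ℓ}`: the sum of the weights of its edges. -/
def hwlen {b ℓ : ℕ} {u v : HVert b ℓ} (p : (HGraph b ℓ).Walk u v) : ℕ :=
  (p.darts.map (fun d => HWeight d.toProd.1 d.toProd.2)).sum

/-- The weighted distance in `H_{b,ℓ}`: the minimum weighted length of a walk. -/
noncomputable def hwdist (b ℓ : ℕ) (u v : HVert b ℓ) : ℕ :=
  sInf {L : ℕ | ∃ p : (HGraph b ℓ).Walk u v, hwlen p = L}

/-- The coordinatewise midpoint `(x+z)/2`. -/
def midVec {b ℓ : ℕ} (x z : Fin ℓ → Fin (2 ^ b)) : Fin ℓ → Fin (2 ^ b) :=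
  fun k => ⟨((x k : ℕ) + (z k : ℕ)) / 2, by
    have hx := (x k).isLt
    have hz := (z k).isLt
    omega⟩

/-- The graph obtained from `H_{b,ℓ}` by deleting all vertices in `W`. -/
def HDel (b ℓ : ℕ) (W : Set (HVert b ℓ)) : SimpleGraph ({v : HVert b ℓ | v ∉ W}) :=
  SimpleGraph.induce {v : HVert b ℓ | v ∉ W} (HGraph b ℓ)

/-- The weighted length of a walk in the deleted graph (weights inherited from `H_{b,ℓ}`). -/
def hwlenDel {b ℓ : ℕ} {W : Set (HVert b ℓ)} {u v : {v : HVert b ℓ | v ∉ W}}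
    (p : (HDel b ℓ W).Walk u v) : ℕ :=
  (p.darts.map (fun d => HWeight d.toProd.1.val d.toProd.2.val)).sum

/-- The weighted distance in the deleted graph. -/
noncomputable def hwdistDel {b ℓ : ℕ} (W : Set (HVert b ℓ))
    (u v : {v : HVert b ℓ | v ∉ W}) : ℕ :=
  sInf {L : ℕ | ∃ p : (HDel b ℓ W).Walk u v, hwlenDel p = L}


open SimpleGraph Finset

namespace HAux

variable {b ℓ : ℕ}

/-- squared difference of two `Fin` values -/
def sqd {n : ℕ} (u v : Fin n) : ℕ := (((u : ℕ) : ℤ) - ((v : ℕ) : ℤ)).natAbs ^ 2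

lemma sqd_self {n : ℕ} (u : Fin n) : sqd u u = 0 := by simp [sqd]

lemma HWeight_eq (u v : HVert b ℓ) :
    HWeight u v = 3 * ℓ * (2 ^ b) ^ 2 + ∑ k : Fin ℓ, sqd (u.2 k) (v.2 k) := rfl

lemma sqd_lt {n : ℕ} (u v : Fin n) : sqd u v < n ^ 2 := by
  have hu := u.isLt; have hv := v.isLt
  have h : (((u : ℕ) : ℤ) - ((v : ℕ) : ℤ)).natAbs < n := by omega
  exact Nat.pow_lt_pow_left h two_ne_zero

lemma chain_eq {α : Type*} (f : ℕ → α) (a : ℕ) :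
    ∀ c, a ≤ c → (∀ i, a ≤ i → i < c → f i = f (i + 1)) → f a = f c := by
  intro c
  induction c with
  | zero => intro h _; obtain rfl : a = 0 := (by omega); rfl
  | succ c ih =>
    intro hac h
    rcases Nat.eq_or_lt_of_le hac with h1 | h1
    · rw [h1]
    · exact (ih (by omega) (fun i hi1 hi2 => h i hi1 (by omega))).trans
        (h c (by omega) (by omega))

lemma sqd_cast {n : ℕ} (A B : Fin n) :
    ((sqd A B : ℕ) : ℤ) = (((A:ℕ):ℤ) - ((B:ℕ):ℤ))^2 := by
  unfold sqd; push_cast; exact sq_abs _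

lemma key_sq {n : ℕ} (X M Z mid : Fin n)
    (hmid : ((X:ℕ):ℤ) + ((Z:ℕ):ℤ) = 2 * ((mid:ℕ):ℤ)) :
    sqd X mid + sqd mid Z ≤ sqd X M + sqd M Z ∧
    (M ≠ mid → sqd X mid + sqd mid Z + 1 ≤ sqd X M + sqd M Z) := by
  have heq : (((X:ℕ):ℤ) - ((M:ℕ):ℤ))^2 + (((M:ℕ):ℤ) - ((Z:ℕ):ℤ))^2
      = (((X:ℕ):ℤ) - ((mid:ℕ):ℤ))^2 + (((mid:ℕ):ℤ) - ((Z:ℕ):ℤ))^2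
        + 2 * (((mid:ℕ):ℤ) - ((M:ℕ):ℤ))^2 := by
    linear_combination (2*((mid:ℕ):ℤ) - 2*((M:ℕ):ℤ)) * hmid
  constructor
  · have : ((sqd X mid + sqd mid Z : ℕ) : ℤ) ≤ ((sqd X M + sqd M Z : ℕ) : ℤ) := by
      push_cast [sqd_cast]
      nlinarith [heq, sq_nonneg (((mid:ℕ):ℤ) - ((M:ℕ):ℤ))]
    exact_mod_cast this
  · intro hne
    have hne' : ((M:ℕ):ℤ) ≠ ((mid:ℕ):ℤ) := by
      simp only [Ne, Int.natCast_inj]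
      exact fun h => hne (Fin.ext h)
    have h1 : 1 ≤ (((mid:ℕ):ℤ) - ((M:ℕ):ℤ)) ^ 2 := by
      rcases lt_or_gt_of_ne hne' with h | h <;> nlinarith
    have : ((sqd X mid + sqd mid Z + 1 : ℕ) : ℤ) ≤ ((sqd X M + sqd M Z : ℕ) : ℤ) := by
      push_cast [sqd_cast]
      linarith [heq, h1]
    exact_mod_cast this

end HAux
namespace HAux

section Walks

lemma walk_of_fun {V : Type*} (G : SimpleGraph V) :
    ∀ (n : ℕ) (g : ℕ → V), (∀ i < n, G.Adj (g i) (g (i+1))) →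
    ∃ p : G.Walk (g 0) (g n), p.length = n ∧ ∀ i ≤ n, p.getVert i = g i := by
  intro n
  induction n with
  | zero => intro g _; exact ⟨.nil, rfl, by intro i hi; interval_cases i; simp⟩
  | succ n ih =>
    intro g h
    obtain ⟨q, hq1, hq2⟩ := ih (fun i => g (i+1)) (fun i hi => h (i+1) (by omega))
    refine ⟨.cons (h 0 (by omega)) q, by simp [hq1], ?_⟩
    rintro (_|i) hi
    · simp
    · rw [SimpleGraph.Walk.getVert_cons_succ]
      exact hq2 i (by omega)

lemma getVert_mem {V : Type*} {G : SimpleGraph V} {u v : V} (p : G.Walk u v) (i : ℕ) :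
    p.getVert i ∈ p.support := by
  induction p generalizing i with
  | nil => cases i <;> simp [SimpleGraph.Walk.getVert]
  | cons h q ih =>
    cases i with
    | zero => simp
    | succ j =>
      rw [SimpleGraph.Walk.getVert_cons_succ, SimpleGraph.Walk.support_cons]
      exact List.mem_cons_of_mem _ (ih j)

lemma support_getVert {V : Type*} {G : SimpleGraph V} {u v : V} (p : G.Walk u v) :
    ∀ w ∈ p.support, ∃ i ≤ p.length, p.getVert i = w := by
  induction p with
  | nil =>
    intro w hw; rw [SimpleGraph.Walk.support_nil, List.mem_singleton] at hw
    exact ⟨0, by omega, by simp [hw]⟩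
  | cons h q ih =>
    intro w hw
    rw [SimpleGraph.Walk.support_cons, List.mem_cons] at hw
    rcases hw with rfl | hw
    · exact ⟨0, by omega, by simp⟩
    · obtain ⟨i, hi, hgi⟩ := ih w hw
      refine ⟨i+1, by simp; omega, ?_⟩
      rwa [SimpleGraph.Walk.getVert_cons_succ]

variable {b ℓ : ℕ}

lemma hwlen_eq_sum {u v : HVert b ℓ} (p : (HGraph b ℓ).Walk u v) :
    hwlen p = ∑ i ∈ Finset.range p.length, HWeight (p.getVert i) (p.getVert (i+1)) := by
  induction p with
  | nil => rfl
  | cons h q ih =>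
    rw [SimpleGraph.Walk.length_cons, Finset.sum_range_succ']
    simp only [SimpleGraph.Walk.getVert_cons_succ, SimpleGraph.Walk.getVert_zero]
    rw [← ih]
    show HWeight _ _ + hwlen q = _
    rw [Nat.add_comm]

lemma hwlenDel_eq_sum {W : Set (HVert b ℓ)} {u v : {v : HVert b ℓ | v ∉ W}}
    (p : (HDel b ℓ W).Walk u v) :
    hwlenDel p = ∑ i ∈ Finset.range p.length,
      HWeight (p.getVert i).val (p.getVert (i+1)).val := by
  induction p with
  | nil => rfl
  | cons h q ih =>
    rw [SimpleGraph.Walk.length_cons, Finset.sum_range_succ']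
    simp only [SimpleGraph.Walk.getVert_cons_succ, SimpleGraph.Walk.getVert_zero]
    rw [← ih]
    show HWeight _ _ + hwlenDel q = _
    rw [Nat.add_comm]

lemma adj_level {u v : HVert b ℓ} (h : (HGraph b ℓ).Adj u v) :
    (u.1 : ℕ) + 1 = (v.1 : ℕ) ∨ (v.1 : ℕ) + 1 = (u.1 : ℕ) := by
  rcases (show HStep u v ∨ HStep v u from h) with h | h
  · exact .inl h.1
  · exact .inr h.1

lemma level_bound {u v : HVert b ℓ} (p : (HGraph b ℓ).Walk u v) :
    (v.1 : ℕ) ≤ (u.1 : ℕ) + p.length ∧ (u.1 : ℕ) ≤ (v.1 : ℕ) + p.length ∧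
      ((u.1 : ℕ) + p.length) % 2 = (v.1 : ℕ) % 2 := by
  induction p with
  | nil => simp
  | cons h q ih =>
    have h2 := adj_level h
    rw [SimpleGraph.Walk.length_cons]
    omega

lemma mono_getVert {u v : HVert b ℓ} (p : (HGraph b ℓ).Walk u v)
    (h : (u.1 : ℕ) + p.length = (v.1 : ℕ)) :
    ∀ i ≤ p.length, ((p.getVert i).1 : ℕ) = (u.1 : ℕ) + i := by
  induction p with
  | nil =>
    intro i hi
    simp only [SimpleGraph.Walk.length_nil, Nat.le_zero] at hi
    subst hi; simp
  | cons ha q ih =>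
    intro i hi
    rw [SimpleGraph.Walk.length_cons] at h hi
    have hb := level_bound q
    have hadj := adj_level ha
    cases i with
    | zero => simp
    | succ j =>
      rw [SimpleGraph.Walk.getVert_cons_succ]
      have := ih (by omega) j (by omega)
      omega

end Walks

end HAux
namespace HAux

variable {b ℓ : ℕ}

lemma hdel_adj {W : Set (HVert b ℓ)} {u v : {v : HVert b ℓ | v ∉ W}} :
    (HDel b ℓ W).Adj u v ↔ (HGraph b ℓ).Adj u.val v.val := by
  simp [HDel]

lemma lift_walk {W : Set (HVert b ℓ)} :
    ∀ {u v : HVert b ℓ} (p : (HGraph b ℓ).Walk u v),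
      (∀ w ∈ p.support, w ∉ W) →
      ∀ (hu : u ∉ W) (hv : v ∉ W),
      ∃ q : (HDel b ℓ W).Walk ⟨u, hu⟩ ⟨v, hv⟩, hwlenDel q = hwlen p := by
  intro u v p
  induction p with
  | nil => intro _ hu hv; exact ⟨.nil, rfl⟩
  | @cons u w v ha q ih =>
    intro hp hu hv
    have hw : w ∉ W := by
      refine hp w ?_
      rw [SimpleGraph.Walk.support_cons]
      exact List.mem_cons_of_mem _ q.start_mem_support
    have hp' : ∀ t ∈ q.support, t ∉ W := by
      intro t ht
      refine hp t ?_
      rw [SimpleGraph.Walk.support_cons]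
      exact List.mem_cons_of_mem _ ht
    obtain ⟨q', hq'⟩ := ih hp' hw hv
    refine ⟨.cons (hdel_adj.mpr ha) q', ?_⟩
    show HWeight u w + hwlenDel q' = HWeight u w + hwlen q
    rw [hq']

lemma proj_walk {W : Set (HVert b ℓ)} :
    ∀ {u v : {v : HVert b ℓ | v ∉ W}} (q : (HDel b ℓ W).Walk u v),
      ∃ p : (HGraph b ℓ).Walk u.val v.val,
        hwlen p = hwlenDel q ∧ ∀ w ∈ p.support, w ∉ W := by
  intro u v q
  induction q with
  | @nil u =>
    refine ⟨.nil, rfl, ?_⟩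
    intro w hw
    rw [SimpleGraph.Walk.support_nil, List.mem_singleton] at hw
    subst hw
    exact u.2
  | @cons u w v ha q ih =>
    obtain ⟨p, hp1, hp2⟩ := ih
    refine ⟨.cons (hdel_adj.mp ha) p, ?_, ?_⟩
    · show HWeight u.val w.val + hwlen p = HWeight u.val w.val + hwlenDel q
      rw [hp1]
    · intro t ht
      rw [SimpleGraph.Walk.support_cons, List.mem_cons] at ht
      rcases ht with rfl | ht
      · exact u.2
      · exact hp2 t ht

end HAux
namespace HAux

variable {b ℓ : ℕ}

/-- the optimal distance value -/
def Dval (b ℓ : ℕ) (x z : Fin ℓ → Fin (2 ^ b)) : ℕ :=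
  2 * ℓ * (3 * ℓ * (2 ^ b) ^ 2) +
    ∑ k : Fin ℓ, (sqd (x k) (midVec x z k) + sqd (midVec x z k) (z k))

/-- coordinates of the optimal path at level `i` -/
def pathVec (x z : Fin ℓ → Fin (2 ^ b)) (i : ℕ) : Fin ℓ → Fin (2 ^ b) :=
  fun k => if i ≤ ℓ then (if (k : ℕ) < i then midVec x z k else x k)
    else (if 2 * ℓ - i ≤ (k : ℕ) then z k else midVec x z k)

variable {x z : Fin ℓ → Fin (2 ^ b)}

lemma pathVec_zero : pathVec x z 0 = x := by
  funext k; simp [pathVec]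

lemma pathVec_last (hℓ : 1 ≤ ℓ) : pathVec x z (2 * ℓ) = z := by
  funext k
  have hk := k.isLt
  simp only [pathVec]
  rw [if_neg (by omega), if_pos (by omega)]

lemma pathVec_mid : pathVec x z ℓ = midVec x z := by
  funext k
  have hk := k.isLt
  simp only [pathVec]
  rw [if_pos le_rfl, if_pos hk]

lemma pathVec_eq (i : ℕ) (hi : i < 2 * ℓ) (k : Fin ℓ) (hk : (k : ℕ) ≠ cidx ℓ i) :
    pathVec x z i k = pathVec x z (i + 1) k := by
  have hkl := k.isLt
  simp only [pathVec, cidx] at *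
  split_ifs at * <;> first | rfl | omega

lemma pathVec_at_k (k : Fin ℓ) : pathVec x z (k : ℕ) k = x k := by
  have hk := k.isLt
  simp only [pathVec]
  rw [if_pos (by omega), if_neg (by omega)]

lemma pathVec_at_k1 (k : Fin ℓ) : pathVec x z ((k : ℕ) + 1) k = midVec x z k := by
  have hk := k.isLt
  simp only [pathVec]
  rw [if_pos (by omega), if_pos (by omega)]

lemma pathVec_at_r (k : Fin ℓ) : pathVec x z (2 * ℓ - 1 - (k : ℕ)) k = midVec x z k := by
  have hk := k.isLt
  simp only [pathVec]
  split_ifs <;> first | rfl | omega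

lemma pathVec_at_r1 (k : Fin ℓ) : pathVec x z (2 * ℓ - (k : ℕ)) k = z k := by
  have hk := k.isLt
  simp only [pathVec]
  rw [if_neg (by omega), if_pos (by omega)]

lemma mid_prop (heven : ∀ k : Fin ℓ, (2 : ℤ) ∣ ((z k : ℤ) - (x k : ℤ)))
    (k : Fin ℓ) : ((x k : ℕ) : ℤ) + ((z k : ℕ) : ℤ) = 2 * ((midVec x z k : ℕ) : ℤ) := by
  have h := heven k
  simp only [midVec]
  push_cast
  omega

end HAux
namespace HAux

variable {b ℓ : ℕ} {x z : Fin ℓ → Fin (2 ^ b)}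

lemma l0 (ℓ : ℕ) : 0 < 2 * ℓ + 1 := Nat.succ_pos _

lemma l2 (ℓ : ℕ) : 2 * ℓ < 2 * ℓ + 1 := Nat.lt_succ_self _

lemma lm (ℓ : ℕ) : ℓ < 2 * ℓ + 1 := Nat.lt_succ_of_le (Nat.le_mul_of_pos_left ℓ (by decide))

lemma not_cidx {k i : ℕ} (hk : k < ℓ) (hik : i ≠ k) (hik2 : i ≠ 2 * ℓ - 1 - k)
    (hi : i < 2 * ℓ) : k ≠ cidx ℓ i := by
  simp only [cidx]
  split_ifs <;> omega

lemma exists_opt (hℓ : 1 ≤ ℓ) :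
    ∃ p : (HGraph b ℓ).Walk ((⟨0, l0 ℓ⟩ : Fin (2 * ℓ + 1)), x)
        ((⟨2 * ℓ, l2 ℓ⟩ : Fin (2 * ℓ + 1)), z),
      hwlen p = Dval b ℓ x z ∧ p.length = 2 * ℓ ∧
      ∀ i (hi : i ≤ 2 * ℓ), p.getVert i = ((⟨i, by omega⟩ : Fin (2 * ℓ + 1)), pathVec x z i) := by
  classical
  set g : ℕ → HVert b ℓ :=
    fun i => ((⟨min i (2 * ℓ), by omega⟩ : Fin (2 * ℓ + 1)), pathVec x z (min i (2 * ℓ)))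
    with hg
  have hgeq : ∀ i (hi : i ≤ 2 * ℓ),
      g i = ((⟨i, by omega⟩ : Fin (2 * ℓ + 1)), pathVec x z i) := by
    intro i hi
    simp only [hg, min_eq_left hi]
  have hadj : ∀ i, i < 2 * ℓ → (HGraph b ℓ).Adj (g i) (g (i + 1)) := by
    intro i hi
    rw [hgeq i (by omega), hgeq (i + 1) (by omega)]
    exact (Or.inl ⟨rfl, fun k hk => pathVec_eq i hi k hk⟩ :
      HStep (((⟨i, by omega⟩ : Fin (2 * ℓ + 1)), pathVec x z i) : HVert b ℓ)
        ((⟨i + 1, by omega⟩ : Fin (2 * ℓ + 1)), pathVec x z (i + 1)) ∨ HStep _ _)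
  obtain ⟨p₀, hlen, hget⟩ := walk_of_fun (HGraph b ℓ) (2 * ℓ) g hadj
  have h0 : g 0 = ((⟨0, l0 ℓ⟩ : Fin (2 * ℓ + 1)), x) := by
    refine (hgeq 0 (by omega)).trans ?_
    exact congrArg _ pathVec_zero
  have h2 : g (2 * ℓ) = ((⟨2 * ℓ, l2 ℓ⟩ : Fin (2 * ℓ + 1)), z) := by
    refine (hgeq _ le_rfl).trans ?_
    exact congrArg _ (pathVec_last hℓ)
  refine ⟨p₀.copy h0 h2, ?_, ?_, ?_⟩
  · have hcopy : hwlen (p₀.copy h0 h2) = hwlen p₀ := by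
      rw [hwlen, hwlen, SimpleGraph.Walk.darts_copy]
    rw [hcopy, hwlen_eq_sum, hlen]
    have hsum : ∀ i ∈ Finset.range (2 * ℓ),
        HWeight (p₀.getVert i) (p₀.getVert (i + 1)) =
        3 * ℓ * (2 ^ b) ^ 2 + ∑ k : Fin ℓ, sqd (pathVec x z i k) (pathVec x z (i + 1) k) := by
      intro i hi
      rw [Finset.mem_range] at hi
      rw [hget i (by omega), hget (i + 1) (by omega), hgeq i (by omega),
        hgeq (i + 1) (by omega), HWeight_eq]
    rw [Finset.sum_congr rfl hsum, Finset.sum_add_distrib, Finset.sum_const,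
      Finset.card_range, smul_eq_mul, Finset.sum_comm]
    unfold Dval
    congr 1
    refine Finset.sum_congr rfl ?_
    intro k _
    have hk := k.isLt
    have hpair : ({(k : ℕ), 2 * ℓ - 1 - (k : ℕ)} : Finset ℕ) ⊆ Finset.range (2 * ℓ) := by
      intro i hi
      simp only [Finset.mem_insert, Finset.mem_singleton] at hi
      rw [Finset.mem_range]
      omega
    have hzero : ∀ i ∈ Finset.range (2 * ℓ),
        i ∉ ({(k : ℕ), 2 * ℓ - 1 - (k : ℕ)} : Finset ℕ) →
        sqd (pathVec x z i k) (pathVec x z (i + 1) k) = 0 := by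
      intro i hi hni
      rw [Finset.mem_range] at hi
      simp only [Finset.mem_insert, Finset.mem_singleton] at hni
      push_neg at hni
      rw [pathVec_eq i hi k (not_cidx hk hni.1 hni.2 hi), sqd_self]
    rw [← Finset.sum_subset hpair hzero, Finset.sum_pair (by omega),
      pathVec_at_k, pathVec_at_k1]
    have : 2 * ℓ - 1 - (k : ℕ) + 1 = 2 * ℓ - (k : ℕ) := by omega
    rw [this, pathVec_at_r, pathVec_at_r1]
  · rw [SimpleGraph.Walk.length_copy, hlen]
  · intro i hi
    rw [SimpleGraph.Walk.getVert_copy, hget i (by omega), hgeq i hi]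

end HAux
namespace HAux

variable {b ℓ : ℕ} {x z : Fin ℓ → Fin (2 ^ b)}

lemma Dval_lt (hb : 1 ≤ b) (hℓ : 1 ≤ ℓ) :
    Dval b ℓ x z < 2 * ℓ * (3 * ℓ * (2 ^ b) ^ 2) + 2 * (3 * ℓ * (2 ^ b) ^ 2) := by
  have hs : 1 ≤ (2 ^ b) ^ 2 := Nat.one_le_pow _ _ (Nat.pow_pos (by norm_num))
  have hterm : ∀ k : Fin ℓ, sqd (x k) (midVec x z k) + sqd (midVec x z k) (z k)
      ≤ 2 * (2 ^ b) ^ 2 := by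
    intro k
    have h1 := sqd_lt (x k) (midVec x z k)
    have h2 := sqd_lt (midVec x z k) (z k)
    omega
  have hsum : ∑ k : Fin ℓ, (sqd (x k) (midVec x z k) + sqd (midVec x z k) (z k))
      ≤ ℓ * (2 * (2 ^ b) ^ 2) := by
    calc ∑ k : Fin ℓ, (sqd (x k) (midVec x z k) + sqd (midVec x z k) (z k))
        ≤ ∑ _k : Fin ℓ, 2 * (2 ^ b) ^ 2 := Finset.sum_le_sum fun k _ => hterm k
      _ = ℓ * (2 * (2 ^ b) ^ 2) := by
          rw [Finset.sum_const, Finset.card_univ, Fintype.card_fin, smul_eq_mul]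
  unfold Dval
  have : ℓ * (2 * (2 ^ b) ^ 2) < 2 * (3 * ℓ * (2 ^ b) ^ 2) := by nlinarith
  omega

set_option maxHeartbeats 1600000 in
lemma lower_bound (hb : 1 ≤ b) (hℓ : 1 ≤ ℓ)
    (heven : ∀ k : Fin ℓ, (2 : ℤ) ∣ ((z k : ℤ) - (x k : ℤ)))
    (p : (HGraph b ℓ).Walk ((⟨0, l0 ℓ⟩ : Fin (2 * ℓ + 1)), x)
      ((⟨2 * ℓ, l2 ℓ⟩ : Fin (2 * ℓ + 1)), z)) :
    Dval b ℓ x z ≤ hwlen p ∧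
      (((⟨ℓ, lm ℓ⟩ : Fin (2 * ℓ + 1)), midVec x z) ∉ p.support →
        Dval b ℓ x z < hwlen p) := by
  classical
  have hA : 1 ≤ 3 * ℓ * (2 ^ b) ^ 2 := by
    have hs : 1 ≤ (2 ^ b) ^ 2 := Nat.one_le_pow _ _ (Nat.pow_pos (by norm_num))
    nlinarith
  have hlb := level_bound p
  have e0 : ((((⟨0, l0 ℓ⟩ : Fin (2 * ℓ + 1)), x) : HVert b ℓ).1 : ℕ) = 0 := rfl
  have e2 : ((((⟨2 * ℓ, l2 ℓ⟩ : Fin (2 * ℓ + 1)), z) : HVert b ℓ).1 : ℕ) = 2 * ℓ := rfl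
  rw [e0, e2] at hlb
  by_cases hlen : p.length = 2 * ℓ
  · -- monotone case
    have hlev : ∀ i, i ≤ 2 * ℓ → ((p.getVert i).1 : ℕ) = i := by
      intro i hi
      have := mono_getVert p (by rw [e0, e2]; omega) i (by omega)
      rw [e0] at this
      omega
    have hcoord : ∀ i, i < 2 * ℓ → ∀ k : Fin ℓ, (k : ℕ) ≠ cidx ℓ i →
        (p.getVert i).2 k = (p.getVert (i + 1)).2 k := by
      intro i hi k hk
      have ha := p.adj_getVert_succ (by omega : i < p.length)
      rcases (show HStep _ _ ∨ HStep _ _ from ha) with h | h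
      · refine h.2 k ?_
        rwa [hlev i (by omega)]
      · exfalso
        have h1 := h.1
        have h2 := hlev i (by omega)
        have h3 := hlev (i + 1) (by omega)
        omega
    have hg2 : p.getVert (2 * ℓ) = ((⟨2 * ℓ, l2 ℓ⟩ : Fin (2 * ℓ + 1)), z) := by
      have h := p.getVert_length
      rwa [hlen] at h
    -- per-coordinate analysis
    have hS : ∀ k : Fin ℓ,
        (sqd (x k) (midVec x z k) + sqd (midVec x z k) (z k) ≤
          ∑ i ∈ Finset.range (2 * ℓ), sqd ((p.getVert i).2 k) ((p.getVert (i + 1)).2 k)) ∧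
        ((p.getVert ℓ).2 k ≠ midVec x z k →
          sqd (x k) (midVec x z k) + sqd (midVec x z k) (z k) + 1 ≤
          ∑ i ∈ Finset.range (2 * ℓ), sqd ((p.getVert i).2 k) ((p.getVert (i + 1)).2 k)) := by
      intro k
      have hk := k.isLt
      set f : ℕ → Fin (2 ^ b) := fun i => (p.getVert i).2 k with hf
      have cA : f (k : ℕ) = x k := by
        have := chain_eq f 0 (k : ℕ) (by omega)
          (fun i hi1 hi2 => hcoord i (by omega) k (not_cidx hk (by omega) (by omega) (by omega)))
        rw [← this, hf]
        simp only [p.getVert_zero]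
      have cB : f ((k : ℕ) + 1) = f ℓ :=
        chain_eq f ((k : ℕ) + 1) ℓ (by omega)
          (fun i hi1 hi2 => hcoord i (by omega) k (not_cidx hk (by omega) (by omega) (by omega)))
      have cC : f ℓ = f (2 * ℓ - 1 - (k : ℕ)) :=
        chain_eq f ℓ (2 * ℓ - 1 - (k : ℕ)) (by omega)
          (fun i hi1 hi2 => hcoord i (by omega) k (not_cidx hk (by omega) (by omega) (by omega)))
      have cD : f (2 * ℓ - (k : ℕ)) = z k := by
        have := chain_eq f (2 * ℓ - (k : ℕ)) (2 * ℓ) (by omega)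
          (fun i hi1 hi2 => hcoord i (by omega) k (not_cidx hk (by omega) (by omega) (by omega)))
        rw [this, hf]
        simp only [hg2]
      have hpair : ({(k : ℕ), 2 * ℓ - 1 - (k : ℕ)} : Finset ℕ) ⊆ Finset.range (2 * ℓ) := by
        intro i hi
        simp only [Finset.mem_insert, Finset.mem_singleton] at hi
        rw [Finset.mem_range]; omega
      have hsub : ∑ i ∈ ({(k : ℕ), 2 * ℓ - 1 - (k : ℕ)} : Finset ℕ), sqd (f i) (f (i + 1)) ≤
          ∑ i ∈ Finset.range (2 * ℓ), sqd (f i) (f (i + 1)) :=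
        Finset.sum_le_sum_of_subset hpair
      have hpairval : ∑ i ∈ ({(k : ℕ), 2 * ℓ - 1 - (k : ℕ)} : Finset ℕ), sqd (f i) (f (i + 1)) =
          sqd (x k) ((p.getVert ℓ).2 k) + sqd ((p.getVert ℓ).2 k) (z k) := by
        rw [Finset.sum_pair (by omega : (k : ℕ) ≠ 2 * ℓ - 1 - (k : ℕ))]
        rw [show 2 * ℓ - 1 - (k : ℕ) + 1 = 2 * ℓ - (k : ℕ) by omega]
        rw [cA, cB, ← cC, cD]
      have hkey := key_sq (x k) ((p.getVert ℓ).2 k) (z k) (midVec x z k) (mid_prop heven k)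
      constructor
      · calc sqd (x k) (midVec x z k) + sqd (midVec x z k) (z k)
            ≤ sqd (x k) ((p.getVert ℓ).2 k) + sqd ((p.getVert ℓ).2 k) (z k) := hkey.1
          _ = _ := hpairval.symm
          _ ≤ _ := hsub
      · intro hne
        calc sqd (x k) (midVec x z k) + sqd (midVec x z k) (z k) + 1
            ≤ sqd (x k) ((p.getVert ℓ).2 k) + sqd ((p.getVert ℓ).2 k) (z k) := hkey.2 hne
          _ = _ := hpairval.symm
          _ ≤ _ := hsub
    have htotal : hwlen p = 2 * ℓ * (3 * ℓ * (2 ^ b) ^ 2) +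
        ∑ k : Fin ℓ, ∑ i ∈ Finset.range (2 * ℓ), sqd ((p.getVert i).2 k) ((p.getVert (i + 1)).2 k) := by
      rw [hwlen_eq_sum, hlen]
      rw [Finset.sum_congr rfl (fun i _ => HWeight_eq (p.getVert i) (p.getVert (i + 1)))]
      rw [Finset.sum_add_distrib, Finset.sum_const, Finset.card_range, smul_eq_mul,
        Finset.sum_comm]
    constructor
    · rw [htotal]
      unfold Dval
      exact Nat.add_le_add_left (Finset.sum_le_sum fun k _ => (hS k).1) _
    · intro hmid
      have hne : ∃ k : Fin ℓ, (p.getVert ℓ).2 k ≠ midVec x z k := by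
        by_contra hcon
        push_neg at hcon
        apply hmid
        have : p.getVert ℓ = ((⟨ℓ, lm ℓ⟩ : Fin (2 * ℓ + 1)), midVec x z) := by
          have h1 := hlev ℓ (by omega)
          refine Prod.ext (Fin.ext ?_) ?_
          · exact h1
          · funext k; exact hcon k
        rw [← this]
        exact getVert_mem p ℓ
      obtain ⟨k0, hk0⟩ := hne
      rw [htotal]
      unfold Dval
      refine Nat.add_lt_add_left ?_ _
      refine Finset.sum_lt_sum (fun k _ => (hS k).1) ⟨k0, Finset.mem_univ _, ?_⟩
      have := (hS k0).2 hk0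
      omega
  · -- too long case
    have hlong : 2 * ℓ + 2 ≤ p.length := by omega
    have hge : p.length * (3 * ℓ * (2 ^ b) ^ 2) ≤ hwlen p := by
      rw [hwlen_eq_sum]
      calc p.length * (3 * ℓ * (2 ^ b) ^ 2)
          = ∑ _i ∈ Finset.range p.length, 3 * ℓ * (2 ^ b) ^ 2 := by
            rw [Finset.sum_const, Finset.card_range, smul_eq_mul]
        _ ≤ _ := Finset.sum_le_sum fun i _ => Nat.le_add_right _ _
    have hd := Dval_lt (x := x) (z := z) hb hℓ
    have : Dval b ℓ x z < hwlen p := by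
      have h1 : (2 * ℓ + 2) * (3 * ℓ * (2 ^ b) ^ 2) ≤ p.length * (3 * ℓ * (2 ^ b) ^ 2) :=
        Nat.mul_le_mul_right _ hlong
      have h2 : 2 * ℓ * (3 * ℓ * (2 ^ b) ^ 2) + 2 * (3 * ℓ * (2 ^ b) ^ 2)
          = (2 * ℓ + 2) * (3 * ℓ * (2 ^ b) ^ 2) := by ring
      omega
    exact ⟨le_of_lt this, fun _ => this⟩

end HAux
namespace HAux

variable {b ℓ : ℕ} {x z : Fin ℓ → Fin (2 ^ b)}

lemma hwdist_eq (hb : 1 ≤ b) (hℓ : 1 ≤ ℓ)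
    (heven : ∀ k : Fin ℓ, (2 : ℤ) ∣ ((z k : ℤ) - (x k : ℤ))) :
    hwdist b ℓ ((⟨0, l0 ℓ⟩ : Fin (2 * ℓ + 1)), x)
      ((⟨2 * ℓ, l2 ℓ⟩ : Fin (2 * ℓ + 1)), z) = Dval b ℓ x z := by
  obtain ⟨p, hp, -, -⟩ := exists_opt (x := x) (z := z) hℓ
  apply le_antisymm
  · exact Nat.sInf_le ⟨p, hp⟩
  · refine le_csInf ⟨hwlen p, p, rfl⟩ ?_
    rintro L ⟨q, rfl⟩
    exact (lower_bound hb hℓ heven q).1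

lemma Dval_pos (hb : 1 ≤ b) (hℓ : 1 ≤ ℓ) : 0 < Dval b ℓ x z := by
  have hs : 1 ≤ (2 ^ b) ^ 2 := Nat.one_le_pow _ _ (Nat.pow_pos (by norm_num))
  have : 0 < 2 * ℓ * (3 * ℓ * (2 ^ b) ^ 2) :=
    Nat.mul_pos (by omega) (Nat.mul_pos (by omega) hs)
  unfold Dval
  omega

lemma del_dist_eq (hb : 1 ≤ b) (hℓ : 1 ≤ ℓ)
    (heven : ∀ k : Fin ℓ, (2 : ℤ) ∣ ((z k : ℤ) - (x k : ℤ)))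
    (W : Set (HVert b ℓ)) (hW : ∀ v ∈ W, (v.1 : ℕ) = ℓ)
    (hu : (((⟨0, l0 ℓ⟩ : Fin (2 * ℓ + 1)), x) : HVert b ℓ) ∉ W)
    (hv : (((⟨2 * ℓ, l2 ℓ⟩ : Fin (2 * ℓ + 1)), z) : HVert b ℓ) ∉ W)
    (hmid : (((⟨ℓ, lm ℓ⟩ : Fin (2 * ℓ + 1)), midVec x z) : HVert b ℓ) ∉ W) :
    hwdistDel W ⟨((⟨0, l0 ℓ⟩ : Fin (2 * ℓ + 1)), x), hu⟩
      ⟨((⟨2 * ℓ, l2 ℓ⟩ : Fin (2 * ℓ + 1)), z), hv⟩ = Dval b ℓ x z := by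
  obtain ⟨p, hp, hplen, hpget⟩ := exists_opt (x := x) (z := z) hℓ
  have hsupp : ∀ w ∈ p.support, w ∉ W := by
    intro w hw hmem
    obtain ⟨i, hi, hgi⟩ := support_getVert p w hw
    rw [hplen] at hi
    rw [hpget i hi] at hgi
    have hlvl : i = ℓ := hW _ (hgi ▸ hmem)
    subst hlvl
    rw [pathVec_mid] at hgi
    rw [← hgi] at hmem
    exact hmid hmem
  obtain ⟨q, hq⟩ := lift_walk p hsupp hu hv
  apply le_antisymm
  · exact Nat.sInf_le ⟨q, by rw [hq, hp]⟩
  · refine le_csInf ⟨hwlenDel q, q, rfl⟩ ?_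
    rintro L ⟨q', rfl⟩
    obtain ⟨p', hp'1, hp'2⟩ := proj_walk q'
    rw [← hp'1]
    exact (lower_bound hb hℓ heven p').1

lemma del_walk_lower (hb : 1 ≤ b) (hℓ : 1 ≤ ℓ)
    (heven : ∀ k : Fin ℓ, (2 : ℤ) ∣ ((z k : ℤ) - (x k : ℤ)))
    (W : Set (HVert b ℓ))
    (hu : (((⟨0, l0 ℓ⟩ : Fin (2 * ℓ + 1)), x) : HVert b ℓ) ∉ W)
    (hv : (((⟨2 * ℓ, l2 ℓ⟩ : Fin (2 * ℓ + 1)), z) : HVert b ℓ) ∉ W)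
    (hmid : (((⟨ℓ, lm ℓ⟩ : Fin (2 * ℓ + 1)), midVec x z) : HVert b ℓ) ∈ W)
    (q : (HDel b ℓ W).Walk ⟨((⟨0, l0 ℓ⟩ : Fin (2 * ℓ + 1)), x), hu⟩
      ⟨((⟨2 * ℓ, l2 ℓ⟩ : Fin (2 * ℓ + 1)), z), hv⟩) :
    Dval b ℓ x z < hwlenDel q := by
  obtain ⟨p, hp1, hp2⟩ := proj_walk q
  rw [← hp1]
  refine (lower_bound hb hℓ heven p).2 ?_
  intro hsup
  exact hp2 _ hsup hmid

end HAux

/-- Deleting a set `W` of middle-layer vertices of `H_{b,ℓ}`: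
if `v_{ℓ,(x+z)/2} ∉ W` the weighted `v_{0,x}`–`v_{2ℓ,z}` distance is unchanged;
if `v_{ℓ,(x+z)/2} ∈ W` then either no walk remains or the distance strictly increases;
in particular membership of `v_{ℓ,(x+z)/2}` in `W` is determined by `x`, `z` and the
weighted distance in the deleted graph. -/
theorem middle_layer_deletion_distance (b ℓ : ℕ) (hb : 1 ≤ b) (hℓ : 1 ≤ ℓ)
    (x z : Fin ℓ → Fin (2 ^ b))
    (heven : ∀ k : Fin ℓ, (2 : ℤ) ∣ ((z k : ℤ) - (x k : ℤ))) :
    (∀ W : Set (HVert b ℓ), ∀ hW : (∀ v ∈ W, (v.1 : ℕ) = ℓ),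
      (((⟨ℓ, by omega⟩ : Fin (2 * ℓ + 1)), midVec x z) ∉ W →
        hwdistDel W
          ⟨(⟨0, by omega⟩, x), fun hmem => by have := hW _ hmem; simp at this; omega⟩
          ⟨(⟨2 * ℓ, by omega⟩, z), fun hmem => by have := hW _ hmem; simp at this; omega⟩ =
          hwdist b ℓ (⟨0, by omega⟩, x) (⟨2 * ℓ, by omega⟩, z)) ∧
      (((⟨ℓ, by omega⟩ : Fin (2 * ℓ + 1)), midVec x z) ∈ W →
        IsEmpty ((HDel b ℓ W).Walk
          ⟨(⟨0, by omega⟩, x), fun hmem => by have := hW _ hmem; simp at this; omega⟩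
          ⟨(⟨2 * ℓ, by omega⟩, z), fun hmem => by have := hW _ hmem; simp at this; omega⟩) ∨
        hwdist b ℓ (⟨0, by omega⟩, x) (⟨2 * ℓ, by omega⟩, z) <
          hwdistDel W
            ⟨(⟨0, by omega⟩, x), fun hmem => by have := hW _ hmem; simp at this; omega⟩
            ⟨(⟨2 * ℓ, by omega⟩, z), fun hmem => by have := hW _ hmem; simp at this; omega⟩)) ∧
    (∀ W₁ W₂ : Set (HVert b ℓ),
      ∀ hW₁ : (∀ v ∈ W₁, (v.1 : ℕ) = ℓ), ∀ hW₂ : (∀ v ∈ W₂, (v.1 : ℕ) = ℓ),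
      hwdistDel W₁
          ⟨(⟨0, by omega⟩, x), fun hmem => by have := hW₁ _ hmem; simp at this; omega⟩
          ⟨(⟨2 * ℓ, by omega⟩, z), fun hmem => by have := hW₁ _ hmem; simp at this; omega⟩ =
        hwdistDel W₂
          ⟨(⟨0, by omega⟩, x), fun hmem => by have := hW₂ _ hmem; simp at this; omega⟩
          ⟨(⟨2 * ℓ, by omega⟩, z), fun hmem => by have := hW₂ _ hmem; simp at this; omega⟩ →
      ((((⟨ℓ, by omega⟩ : Fin (2 * ℓ + 1)), midVec x z) ∈ W₁) ↔
        (((⟨ℓ, by omega⟩ : Fin (2 * ℓ + 1)), midVec x z) ∈ W₂))) := by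
  classical
  have hdist : hwdist b ℓ ((⟨0, by omega⟩ : Fin (2 * ℓ + 1)), x)
      ((⟨2 * ℓ, by omega⟩ : Fin (2 * ℓ + 1)), z) = HAux.Dval b ℓ x z :=
    HAux.hwdist_eq hb hℓ heven
  have hDpos : 0 < HAux.Dval b ℓ x z := HAux.Dval_pos hb hℓ
  -- generic facts about a deleted graph, for any admissible W
  have key1 : ∀ (W : Set (HVert b ℓ)) (hW : ∀ v ∈ W, (v.1 : ℕ) = ℓ),
      ((⟨ℓ, by omega⟩ : Fin (2 * ℓ + 1)), midVec x z) ∉ W →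
      hwdistDel W
        ⟨(⟨0, by omega⟩, x), fun hmem => by have := hW _ hmem; simp at this; omega⟩
        ⟨(⟨2 * ℓ, by omega⟩, z), fun hmem => by have := hW _ hmem; simp at this; omega⟩ =
        HAux.Dval b ℓ x z := by
    intro W hW hmid
    exact HAux.del_dist_eq hb hℓ heven W hW _ _ hmid
  have key2 : ∀ (W : Set (HVert b ℓ)) (hW : ∀ v ∈ W, (v.1 : ℕ) = ℓ),
      ((⟨ℓ, by omega⟩ : Fin (2 * ℓ + 1)), midVec x z) ∈ W →
      (IsEmpty ((HDel b ℓ W).Walk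
          ⟨(⟨0, by omega⟩, x), fun hmem => by have := hW _ hmem; simp at this; omega⟩
          ⟨(⟨2 * ℓ, by omega⟩, z), fun hmem => by have := hW _ hmem; simp at this; omega⟩) ∧
        hwdistDel W
          ⟨(⟨0, by omega⟩, x), fun hmem => by have := hW _ hmem; simp at this; omega⟩
          ⟨(⟨2 * ℓ, by omega⟩, z), fun hmem => by have := hW _ hmem; simp at this; omega⟩ = 0) ∨
      HAux.Dval b ℓ x z + 1 ≤ hwdistDel W
          ⟨(⟨0, by omega⟩, x), fun hmem => by have := hW _ hmem; simp at this; omega⟩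
          ⟨(⟨2 * ℓ, by omega⟩, z), fun hmem => by have := hW _ hmem; simp at this; omega⟩ := by
    intro W hW hmid
    by_cases hne : Nonempty ((HDel b ℓ W).Walk
        ⟨(⟨0, by omega⟩, x), fun hmem => by have := hW _ hmem; simp at this; omega⟩
        ⟨(⟨2 * ℓ, by omega⟩, z), fun hmem => by have := hW _ hmem; simp at this; omega⟩)
    · right
      obtain ⟨q0⟩ := hne
      refine le_csInf ⟨hwlenDel q0, q0, rfl⟩ ?_
      rintro L ⟨q, rfl⟩
      exact HAux.del_walk_lower hb hℓ heven W _ _ hmid q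
    · left
      refine ⟨⟨fun q => hne ⟨q⟩⟩, ?_⟩
      have hempty : {L : ℕ | ∃ q : (HDel b ℓ W).Walk
          ⟨(⟨0, by omega⟩, x), fun hmem => by have := hW _ hmem; simp at this; omega⟩
          ⟨(⟨2 * ℓ, by omega⟩, z), fun hmem => by have := hW _ hmem; simp at this; omega⟩,
          hwlenDel q = L} = ∅ := by
        rw [Set.eq_empty_iff_forall_notMem]
        rintro L ⟨q, -⟩
        exact hne ⟨q⟩
      show sInf _ = 0
      rw [hempty, Nat.sInf_empty]
  refine ⟨?_, ?_⟩
  · intro W hW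
    refine ⟨?_, ?_⟩
    · intro hmid
      exact (key1 W hW hmid).trans hdist.symm
    · intro hmid
      rcases key2 W hW hmid with ⟨hemp, -⟩ | hlt
      · exact Or.inl hemp
      · right
        calc hwdist b ℓ ((⟨0, by omega⟩ : Fin (2 * ℓ + 1)), x)
              ((⟨2 * ℓ, by omega⟩ : Fin (2 * ℓ + 1)), z) = HAux.Dval b ℓ x z := hdist
          _ < _ := by omega
  · intro W₁ W₂ hW₁ hW₂ heqd
    constructor
    · intro h1
      by_contra h2
      have e2 := key1 W₂ hW₂ h2
      rcases key2 W₁ hW₁ h1 with ⟨-, h0⟩ | hlt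
      · omega
      · omega
    · intro h2
      by_contra h1
      have e1 := key1 W₁ hW₁ h1
      rcases key2 W₂ hW₂ h2 with ⟨-, h0⟩ | hlt
      · omega
      · omega
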